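/- Let φ ∈ C^d(ℝ) and define J_d(s₁,…,s_d; φ) as the determinant of the d×d matrix whose j-th column is (1, s_j, s_j²/2!, …, s_j^{d−2}/(d−2)!, φ'(s_j))ᵀ. Then for s₁ < s₂ < ⋯ < s_d, J_d(s₁,…,s_d; φ) = ∫_{s₁}^{s₂} ⋯ ∫_{s_{d−1}}^{s_d} J_{d−1}(σ₁,…,σ_{d−1}; φ') dσ_{d−1} ⋯ dσ₁. -/

import Mathlib

open MeasureTheory

/-- The matrix whose `j`-th column is `(1, s_j, s_j²/2!, …, s_j^{m-2}/(m-2)!, φ'(s_j))ᵀ`. -/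
noncomputable def Jmat (m : ℕ) (s : Fin m → ℝ) (φ : ℝ → ℝ) : Matrix (Fin m) (Fin m) ℝ :=
  Matrix.of fun i j =>
    if i.val < m - 1 then s j ^ i.val / (Nat.factorial i.val) else deriv φ (s j)

/-- The generalized Vandermonde-type determinant `J_m(s₁,…,s_m; φ)`. -/
noncomputable def Jdet (m : ℕ) (s : Fin m → ℝ) (φ : ℝ → ℝ) : ℝ := (Jmat m s φ).det

lemma restrict_pi_aux (m : ℕ) (S : Fin m → Set ℝ) (hS : ∀ i, MeasurableSet (S i)) :
    (volume : Measure (Fin m → ℝ)).restrict (Set.univ.pi S) =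
      Measure.pi (fun i => volume.restrict (S i)) := by
  refine (Measure.pi_eq fun t ht => ?_).symm
  rw [Measure.restrict_apply (MeasurableSet.univ_pi ht), ← Set.pi_inter_distrib,
    volume_pi_pi]
  exact Finset.prod_congr rfl fun i _ => (Measure.restrict_apply (ht i)).symm

lemma pi_integral_prod (m : ℕ) (μ : Fin m → Measure ℝ) [∀ i, SigmaFinite (μ i)]
    (f : Fin m → ℝ → ℝ) :
    ∫ x, ∏ i, f i (x i) ∂Measure.pi μ = ∏ i, ∫ t, f i t ∂μ i := by
  exact @MeasureTheory.integral_fin_nat_prod_eq_prod ℝ _ m (fun _ => ℝ)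
    (fun _ => inferInstance) μ (fun i => show SigmaFinite (μ i) from inferInstance) f

theorem stmt7 (d : ℕ) (hd : 2 ≤ d) (φ : ℝ → ℝ) (hφ : ContDiff ℝ (d : ℕ∞) φ)
    (s : Fin d → ℝ) (hs : StrictMono s) :
    Jdet d s φ =
      ∫ σ in Set.univ.pi (fun j : Fin (d - 1) =>
          Set.Icc (s ⟨j.val, by have := j.isLt; omega⟩)
            (s ⟨j.val + 1, by have := j.isLt; omega⟩)),
        Jdet (d - 1) σ (deriv φ) := by
  obtain ⟨n, rfl⟩ : ∃ n, d = n + 2 := ⟨d - 2, by omega⟩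
  -- regularity facts
  have h2 : ContDiff ℝ 2 φ := by
    apply hφ.of_le
    norm_cast
    exact_mod_cast Nat.le_add_left 2 n
  have h2' : Differentiable ℝ φ ∧ ContDiff ℝ 1 (deriv φ) := by
    have := (contDiff_succ_iff_deriv (n := 1)).mp (by exact_mod_cast h2)
    exact ⟨this.1, this.2.2⟩
  have hd1 : Differentiable ℝ (deriv φ) ∧ Continuous (deriv (deriv φ)) :=
    contDiff_one_iff_deriv.mp h2'.2
  -- the functions in the inner matrix
  set g : Fin (n+1) → ℝ → ℝ :=
    fun k t => if k.val < n then t ^ k.val / (Nat.factorial k.val) else deriv (deriv φ) t with hg_def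
  have hg : ∀ k, Continuous (g k) := by
    intro k
    by_cases h : k.val < n
    · simpa [hg_def, h] using (continuous_pow k.val).div_const _
    · simpa [hg_def, h] using hd1.2
  -- the matrix of integrals
  set N : Matrix (Fin (n+1)) (Fin (n+1)) ℝ :=
    Matrix.of (fun k j => ∫ t in Set.Icc (s j.castSucc) (s j.succ), g k t) with hN_def
  have step1 :
      (∫ σ in Set.univ.pi (fun j : Fin (n + 1) =>
          Set.Icc (s j.castSucc) (s j.succ)),
        Jdet (n + 1) σ (deriv φ)) = N.det := by
    have hcompact : IsCompact (Set.univ.pi fun j : Fin (n+1) =>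
        Set.Icc (s j.castSucc) (s j.succ)) :=
      isCompact_univ_pi fun j => isCompact_Icc
    have e1 : ∀ σ : Fin (n+1) → ℝ, Jdet (n+1) σ (deriv φ) =
        ∑ π : Equiv.Perm (Fin (n+1)),
          (((Equiv.Perm.sign π : ℤ) : ℝ)) * ∏ j, g (π j) (σ j) := by
      intro σ
      rw [Jdet, Matrix.det_apply']
      rfl
    simp_rw [e1]
    rw [integral_finset_sum]
    · rw [Matrix.det_apply']
      refine Finset.sum_congr rfl fun π _ => ?_
      rw [MeasureTheory.integral_const_mul]
      congr 1
      rw [restrict_pi_aux _ _ (fun j => measurableSet_Icc),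
        pi_integral_prod (n+1) (fun j => volume.restrict
          (Set.Icc (s j.castSucc) (s j.succ))) (fun j t => g (π j) t)]
      rfl
    · intro π _
      have hcont : Continuous fun σ : Fin (n+1) → ℝ =>
          (((Equiv.Perm.sign π : ℤ) : ℝ)) * ∏ j, g (π j) (σ j) :=
        continuous_const.mul (continuous_finset_prod _ fun j _ =>
          (hg (π j)).comp (continuous_apply j))
      exact hcont.continuousOn.integrableOn_compact hcompact
  -- entry computation: integral of g over an interval
  have hkey : ∀ (i : Fin (n+1)) (a b : ℝ), a ≤ b →
      ∫ t in Set.Icc a b, g i t =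
        (if i.val + 1 < n + 1 then b ^ (i.val+1) / (Nat.factorial (i.val+1)) else deriv φ b)
        - (if i.val + 1 < n + 1 then a ^ (i.val+1) / (Nat.factorial (i.val+1)) else deriv φ a) := by
    intro i a b hab
    by_cases h : i.val < n
    · have h' : i.val + 1 < n + 1 := by omega
      simp only [hg_def, if_pos h, if_pos h']
      rw [MeasureTheory.integral_Icc_eq_integral_Ioc, ← intervalIntegral.integral_of_le hab]
      rw [intervalIntegral.integral_div, integral_pow]
      have hk : ((Nat.factorial i.val : ℝ)) ≠ 0 := by
        exact_mod_cast (Nat.factorial_pos i.val).ne'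
      have hk1 : ((i.val : ℝ) + 1) ≠ 0 := by positivity
      rw [Nat.factorial_succ]
      push_cast
      field_simp
    · have h' : ¬ (i.val + 1 < n + 1) := by omega
      simp only [hg_def, if_neg h, if_neg h']
      rw [MeasureTheory.integral_Icc_eq_integral_Ioc, ← intervalIntegral.integral_of_le hab]
      exact intervalIntegral.integral_deriv_eq_sub (fun x _ => (hd1.1 x))
        (hd1.2.intervalIntegrable a b)
  have step2 : N.det = Jdet (n+2) s φ := by
    set A : Matrix (Fin (n+2)) (Fin (n+2)) ℝ := Jmat (n+2) s φ with hA_def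
    set E : Matrix (Fin (n+2)) (Fin (n+2)) ℝ :=
      Matrix.of (fun i j => if i = j then 1 else if i.val + 1 = j.val then -1 else 0) with hE_def
    have hEdet : E.det = 1 := by
      rw [Matrix.det_of_upperTriangular]
      · simp [hE_def]
      · intro i j hji
        have h2 : (j : ℕ) < (i : ℕ) := hji
        have h1 : i ≠ j := by
          intro h; rw [h] at h2; omega
        have h3 : ¬ (i.val + 1 = j.val) := by omega
        simp [hE_def, h1, h3]
    have fact2 : ∀ (i : Fin (n+2)) (j : Fin (n+1)),
        (A * E) i j.succ = A i j.succ - A i j.castSucc := by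
      intro i j
      have hE2 : ∀ k : Fin (n+2), E k j.succ =
          (if k = j.succ then (1:ℝ) else 0) + (if k = j.castSucc then -1 else 0) := by
        intro k
        simp only [hE_def, Matrix.of_apply, Fin.val_succ]
        have hne : j.succ ≠ j.castSucc := (Fin.castSucc_lt_succ (i := j)).ne'
        by_cases h1 : k = j.succ
        · simp [h1, hne]
        · have h3 : (k.val + 1 = j.val + 1) ↔ k = j.castSucc := by
            constructor
            · intro h
              apply Fin.ext
              simpa using Nat.succ_injective h
            · intro h; subst h; simp
          by_cases h4 : k = j.castSucc
          · have : k.val + 1 = j.val + 1 := h3.mpr h4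
            simp [h1, h4, this, hne.symm]
          · have : ¬ (k.val + 1 = j.val + 1) := fun h => h4 (h3.mp h)
            simp [h1, h4, this]
            omega
      rw [Matrix.mul_apply]
      simp only [hE2, mul_add, Finset.sum_add_distrib, mul_ite, mul_one, mul_zero,
        mul_neg, Finset.sum_ite_eq', Finset.mem_univ, if_true]
      ring
    have fact1 : ∀ (i : Fin (n+2)), (A * E) i 0 = A i 0 := by
      intro i
      have hE0 : ∀ k : Fin (n+2), E k 0 = (if k = 0 then (1:ℝ) else 0) := by
        intro k
        simp [hE_def]
      rw [Matrix.mul_apply]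
      simp only [hE0, mul_ite, mul_one, mul_zero, Finset.sum_ite_eq', Finset.mem_univ, if_true]
    have hrow0 : ∀ j : Fin (n+2), (A * E) 0 j = if j = 0 then 1 else 0 := by
      intro j
      rcases Fin.eq_zero_or_eq_succ j with rfl | ⟨j', rfl⟩
      · rw [fact1]
        simp [hA_def, Jmat]
      · rw [fact2]
        have : ∀ x : Fin (n+2), A 0 x = 1 := by
          intro x
          simp [hA_def, Jmat]
        simp [this, Fin.succ_ne_zero]
    have hsub : (A * E).submatrix Fin.succ Fin.succ = N := by
      ext i j
      rw [Matrix.submatrix_apply, fact2]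
      have hab : s j.castSucc ≤ s j.succ := (hs (Fin.castSucc_lt_succ (i := j))).le
      have := hkey i (s j.castSucc) (s j.succ) hab
      have hiv : (i.succ : Fin (n+2)).val = i.val + 1 := rfl
      simp only [hN_def, Matrix.of_apply, this, hA_def, Jmat, Matrix.of_apply, hiv]
      have : (i.val + 1 < n + 2 - 1) ↔ (i.val + 1 < n + 1) := by omega
      simp [this]
    have expand : (A * E).det = N.det := by
      rw [Matrix.det_succ_row_zero]
      rw [Fin.sum_univ_succ]
      have h0 : ((A * E) 0 0 : ℝ) = 1 := by rw [hrow0]; simp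
      have hz : ∀ j : Fin (n+1), (A * E) 0 j.succ = 0 := by
        intro j; rw [hrow0]; simp [Fin.succ_ne_zero]
      simp only [h0, hz, mul_zero, zero_mul, mul_one, Finset.sum_const_zero, add_zero,
        Fin.val_zero, pow_zero, one_mul, Fin.succAbove_zero]
      rw [hsub]
    rw [← expand, Matrix.det_mul, hEdet, mul_one, hA_def, Jdet]
  rw [step2.symm.trans step1.symm]
  rfl
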